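/- Let C be a real symmetric positive definite n×n matrix with unit diagonal, let b⁽¹⁾, …, b⁽ˢ⁾ ∈ ℝⁿ, and let 1 ≤ k ≤ d ≤ n. Define F(D) := Σ_{j=1}^s max over S ⊆ D with |S| ≤ k of R²_j(S), and F̂(D) := Σ_{j=1}^s max over S ⊆ D with |S| ≤ k of Σ_{i∈S} (b⁽ʲ⁾_i)². Let ∅ = D₀ ⊂ D₁ ⊂ ⋯ ⊂ D_d be the SDS_MA greedy sequence: D_{i+1} = D_i ∪ {x_i}, where x_i ∉ D_i maximizes F̂(D_i ∪ {x}) over all x ∉ D_i. Then F(D_d) ≥ (λmin(C,k)/λmax(C,k)) · (1 − 1/e) · F(D*), where D* is any subset of {1,…,n} of size at most d. -/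

import Mathlib

open scoped Matrix

/-- The smallest eigenvalue of a real symmetric (Hermitian) matrix. -/
noncomputable def lambdaMin {m : Type*} [Fintype m] [DecidableEq m] (A : Matrix m m ℝ) : ℝ :=
  if hA : A.IsHermitian then ⨅ i, hA.eigenvalues i else 0

/-- The largest eigenvalue of a real symmetric (Hermitian) matrix. -/
noncomputable def lambdaMax {m : Type*} [Fintype m] [DecidableEq m] (A : Matrix m m ℝ) : ℝ :=
  if hA : A.IsHermitian then ⨆ i, hA.eigenvalues i else 0

/-- The principal submatrix of `C` on rows and columns in `S`. -/
def subMat {ι : Type*} (C : Matrix ι ι ℝ) (S : Finset ι) : Matrix S S ℝ :=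
  fun i j => C i j

/-- `R²(S) = b_Sᵀ (C_S)⁻¹ b_S`, the squared multiple correlation. -/
noncomputable def R2 {ι : Type*} [Fintype ι] [DecidableEq ι]
    (C : Matrix ι ι ℝ) (b : ι → ℝ) (S : Finset ι) : ℝ :=
  (fun i : S => b i) ⬝ᵥ (subMat C S)⁻¹ *ᵥ (fun i : S => b i)

/-- `λmin(C,k)`: the smallest eigenvalue of any `k × k` principal submatrix of `C`. -/
noncomputable def lambdaMinK {n : ℕ} (C : Matrix (Fin n) (Fin n) ℝ) (k : ℕ) : ℝ :=
  sInf {x | ∃ S : Finset (Fin n), S.card = k ∧ x = lambdaMin (subMat C S)}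

/-- `λmax(C,k)`: the largest eigenvalue of any `k × k` principal submatrix of `C`. -/
noncomputable def lambdaMaxK {n : ℕ} (C : Matrix (Fin n) (Fin n) ℝ) (k : ℕ) : ℝ :=
  sSup {x | ∃ S : Finset (Fin n), S.card = k ∧ x = lambdaMax (subMat C S)}

/-- `Cov(Res(Z|S), X_m) = b_m - C_{m,S} (C_S)⁻¹ b_S`. -/
noncomputable def resCov {ι : Type*} [Fintype ι] [DecidableEq ι]
    (C : Matrix ι ι ℝ) (b : ι → ℝ) (S : Finset ι) (m : ι) : ℝ :=
  b m - (fun i : S => C m i) ⬝ᵥ ((subMat C S)⁻¹ *ᵥ (fun i : S => b i))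

/-- The dictionary selection objective
`F(D) = Σ_j max_{S ⊆ D, |S| ≤ k} R²_j(S)`. -/
noncomputable def Fdict {n s : ℕ} (C : Matrix (Fin n) (Fin n) ℝ)
    (bs : Fin s → Fin n → ℝ) (k : ℕ) (D : Finset (Fin n)) : ℝ :=
  ∑ j, sSup {x | ∃ S ⊆ D, S.card ≤ k ∧ x = R2 C (bs j) S}

/-- The modular approximation objective
`F̂(D) = Σ_j max_{S ⊆ D, |S| ≤ k} Σ_{i∈S} (b⁽ʲ⁾_i)²`. -/
noncomputable def Fma {n s : ℕ} (bs : Fin s → Fin n → ℝ) (k : ℕ)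
    (D : Finset (Fin n)) : ℝ :=
  ∑ j, sSup {x | ∃ S ⊆ D, S.card ≤ k ∧ x = ∑ i ∈ S, (bs j i) ^ 2}

section Aux
open Matrix
set_option linter.unusedSectionVars false

set_option linter.unusedSectionVars false


variable {m : Type*} [Fintype m] [DecidableEq m] {A : Matrix m m ℝ}

lemma lambdaMin_eq (hA : A.IsHermitian) : lambdaMin A = ⨅ i, hA.eigenvalues i := dif_pos hA
lemma lambdaMax_eq (hA : A.IsHermitian) : lambdaMax A = ⨆ i, hA.eigenvalues i := dif_pos hA

lemma lambdaMin_le (hA : A.IsHermitian) (i : m) : lambdaMin A ≤ hA.eigenvalues i := by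
  rw [lambdaMin_eq hA]; exact ciInf_le (Set.Finite.bddBelow (Set.finite_range _)) i

lemma le_lambdaMax (hA : A.IsHermitian) (i : m) : hA.eigenvalues i ≤ lambdaMax A := by
  rw [lambdaMax_eq hA]; exact le_ciSup (Set.Finite.bddAbove (Set.finite_range _)) i

lemma exists_unit_max [Nonempty m] (hA : A.IsHermitian) :
    ∃ v : m → ℝ, v ⬝ᵥ v = 1 ∧ v ⬝ᵥ A *ᵥ v = lambdaMax A := by
  obtain ⟨i, hi⟩ := exists_eq_ciSup_of_finite (f := hA.eigenvalues)
  set v : m → ℝ := ⇑(hA.eigenvectorBasis i) with hv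
  have hnorm : ‖hA.eigenvectorBasis i‖ = 1 := hA.eigenvectorBasis.orthonormal.1 i
  have hvv : v ⬝ᵥ v = 1 := by
    have h1 : (inner ℝ (hA.eigenvectorBasis i) (hA.eigenvectorBasis i) : ℝ) = 1 := by
      rw [real_inner_self_eq_norm_sq, hnorm]; norm_num
    rw [← h1, PiLp.inner_apply]
    simp only [dotProduct, RCLike.inner_apply, conj_trivial]
    rfl
  refine ⟨v, hvv, ?_⟩
  rw [hA.mulVec_eigenvectorBasis i, dotProduct_smul, smul_eq_mul, hvv, mul_one,
    lambdaMax_eq hA, hi]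

lemma exists_unit_min [Nonempty m] (hA : A.IsHermitian) :
    ∃ v : m → ℝ, v ⬝ᵥ v = 1 ∧ v ⬝ᵥ A *ᵥ v = lambdaMin A := by
  obtain ⟨i, hi⟩ := exists_eq_ciInf_of_finite (f := hA.eigenvalues)
  set v : m → ℝ := ⇑(hA.eigenvectorBasis i) with hv
  have hnorm : ‖hA.eigenvectorBasis i‖ = 1 := hA.eigenvectorBasis.orthonormal.1 i
  have hvv : v ⬝ᵥ v = 1 := by
    have h1 : (inner ℝ (hA.eigenvectorBasis i) (hA.eigenvectorBasis i) : ℝ) = 1 := by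
      rw [real_inner_self_eq_norm_sq, hnorm]; norm_num
    rw [← h1, PiLp.inner_apply]
    simp only [dotProduct, RCLike.inner_apply, conj_trivial]
    rfl
  refine ⟨v, hvv, ?_⟩
  rw [hA.mulVec_eigenvectorBasis i, dotProduct_smul, smul_eq_mul, hvv, mul_one,
    lambdaMin_eq hA, hi]

lemma lambdaMin_pos [Nonempty m] (hA : A.PosDef) : 0 < lambdaMin A := by
  obtain ⟨i, hi⟩ := exists_eq_ciInf_of_finite (f := hA.isHermitian.eigenvalues)
  rw [lambdaMin_eq hA.isHermitian, ← hi]; exact hA.eigenvalues_pos i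

lemma lambdaMax_pos [Nonempty m] (hA : A.PosDef) : 0 < lambdaMax A := by
  obtain i := Classical.arbitrary m
  exact lt_of_lt_of_le (hA.eigenvalues_pos i) (le_lambdaMax hA.isHermitian i)

lemma conj_coords (U : Matrix m m ℝ) (hUU : U * star U = 1) (v : m → ℝ) (x : m → ℝ) :
    ∃ c : m → ℝ, (x ⬝ᵥ x = ∑ i, c i ^ 2) ∧
      (x ⬝ᵥ (U * diagonal v * star U) *ᵥ x = ∑ i, v i * c i ^ 2) := by
  classical
  set c : m → ℝ := star U *ᵥ x with hc
  have hxU : x ᵥ* U = c := by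
    rw [hc, ← Matrix.mulVec_transpose]
    rfl
  refine ⟨c, ?_, ?_⟩
  · calc x ⬝ᵥ x = x ⬝ᵥ ((U * star U) *ᵥ x) := by rw [hUU, Matrix.one_mulVec]
    _ = (x ᵥ* U) ⬝ᵥ (star U *ᵥ x) := by rw [← Matrix.mulVec_mulVec, Matrix.dotProduct_mulVec]
    _ = ∑ i, c i ^ 2 := by rw [hxU, ← hc]; simp [dotProduct, pow_two]
  · calc x ⬝ᵥ (U * diagonal v * star U) *ᵥ x
        = (x ᵥ* U) ⬝ᵥ (diagonal v *ᵥ (star U *ᵥ x)) := by rw [← Matrix.mulVec_mulVec, ← Matrix.mulVec_mulVec, Matrix.dotProduct_mulVec]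
    _ = ∑ i, v i * c i ^ 2 := by
        rw [hxU, ← hc]
        simp only [Matrix.mulVec_diagonal, dotProduct, pow_two]
        exact Finset.sum_congr rfl fun i _ => by ring

lemma spectral_coords (hA : A.IsHermitian) (x : m → ℝ) :
    ∃ c : m → ℝ, (x ⬝ᵥ x = ∑ i, c i ^ 2) ∧ (x ⬝ᵥ A *ᵥ x = ∑ i, hA.eigenvalues i * c i ^ 2) := by
  have hdiag : diagonal (RCLike.ofReal ∘ hA.eigenvalues) = diagonal hA.eigenvalues := by
    simp [RCLike.ofReal]
  have hAspec : A = (hA.eigenvectorUnitary : Matrix m m ℝ) * diagonal hA.eigenvalues *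
      star (hA.eigenvectorUnitary : Matrix m m ℝ) := by
    rw [← hdiag]; exact hA.spectral_theorem
  obtain ⟨c, h1, h2⟩ := conj_coords (hA.eigenvectorUnitary : Matrix m m ℝ)
    ((Matrix.mem_unitaryGroup_iff).mp hA.eigenvectorUnitary.2) hA.eigenvalues x
  exact ⟨c, h1, (congrArg (fun M => x ⬝ᵥ M *ᵥ x) hAspec).trans h2⟩

lemma inv_spectral_coords (hA : A.PosDef) (x : m → ℝ) :
    ∃ c : m → ℝ, (x ⬝ᵥ x = ∑ i, c i ^ 2) ∧
      (x ⬝ᵥ A⁻¹ *ᵥ x = ∑ i, (hA.isHermitian.eigenvalues i)⁻¹ * c i ^ 2) := by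
  classical
  set hH := hA.isHermitian
  set U : Matrix m m ℝ := (hH.eigenvectorUnitary : Matrix m m ℝ) with hUdef
  have hUU : U * star U = 1 := (Matrix.mem_unitaryGroup_iff).mp hH.eigenvectorUnitary.2
  have hUU' : star U * U = 1 := (Matrix.mem_unitaryGroup_iff').mp hH.eigenvectorUnitary.2
  have hdiag : diagonal (RCLike.ofReal ∘ hH.eigenvalues) = diagonal hH.eigenvalues := by
    simp [RCLike.ofReal]
  have hAspec : A = U * diagonal hH.eigenvalues * star U := by
    rw [← hdiag]; exact hH.spectral_theorem
  set Dm : Matrix m m ℝ := diagonal hH.eigenvalues with hDm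
  set Dm' : Matrix m m ℝ := diagonal (fun i => (hH.eigenvalues i)⁻¹) with hDm'
  have hAinv : A⁻¹ = U * Dm' * star U := by
    apply Matrix.inv_eq_right_inv
    calc A * (U * Dm' * star U) = (U * Dm * star U) * (U * Dm' * star U) :=
          congrArg (· * (U * Dm' * star U)) hAspec
    _ = U * Dm * ((star U * U) * (Dm' * star U)) := by simp only [mul_assoc]
    _ = U * (Dm * Dm') * star U := by rw [hUU', one_mul]; simp only [mul_assoc]
    _ = 1 := by
          rw [hDm, hDm', Matrix.diagonal_mul_diagonal]
          have : (fun i => hH.eigenvalues i * (hH.eigenvalues i)⁻¹) = fun _ => (1:ℝ) := by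
            funext i; exact mul_inv_cancel₀ (hA.eigenvalues_pos i).ne'
          rw [this, Matrix.diagonal_one, mul_one, hUU]
  obtain ⟨c, h1, h2⟩ := conj_coords U hUU (fun i => (hH.eigenvalues i)⁻¹) x
  exact ⟨c, h1, (congrArg (fun M => x ⬝ᵥ M *ᵥ x) hAinv).trans h2⟩



section ext
variable {α β : Type*} [Fintype α] [Fintype β] [DecidableEq α] [DecidableEq β]

lemma sum_extend_mul (e : α ↪ β) (x : α → ℝ) (g : β → ℝ) :
    ∑ j, (Function.extend e x 0) j * g j = ∑ i, x i * g (e i) := by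
  rw [← Finset.sum_subset (Finset.subset_univ (Finset.univ.image e))
    (fun j _ hj => by
      rw [Function.extend_apply' x (0 : β → ℝ) j (by simpa [Finset.mem_image] using hj), Pi.zero_apply,
        zero_mul]),
    Finset.sum_image (fun a _ b _ h => e.injective h)]
  exact Finset.sum_congr rfl fun i _ => by rw [e.injective.extend_apply]

lemma dot_extend (e : α ↪ β) (x y : α → ℝ) :
    (Function.extend e x 0) ⬝ᵥ (Function.extend e y 0) = x ⬝ᵥ y := by
  unfold dotProduct
  rw [sum_extend_mul]
  exact Finset.sum_congr rfl fun i _ => by rw [e.injective.extend_apply]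

lemma quad_extend (M : Matrix β β ℝ) (e : α ↪ β) (x : α → ℝ) :
    (Function.extend e x 0) ⬝ᵥ M *ᵥ (Function.extend e x 0) = x ⬝ᵥ (M.submatrix e e) *ᵥ x := by
  unfold dotProduct mulVec
  rw [sum_extend_mul]
  refine Finset.sum_congr rfl fun i _ => ?_
  congr 1
  calc (∑ j, M (e i) j * Function.extend e x 0 j)
      = ∑ j, Function.extend e x 0 j * M (e i) j := by
        exact Finset.sum_congr rfl fun j _ => mul_comm _ _
    _ = ∑ i', x i' * M (e i) (e i') := sum_extend_mul e x _
    _ = ∑ i', M.submatrix e e i i' * x i' := Finset.sum_congr rfl fun j _ => mul_comm _ _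

lemma extend_ne_zero (e : α ↪ β) {x : α → ℝ} (hx : x ≠ 0) : Function.extend e x 0 ≠ 0 := by
  obtain ⟨i, hi⟩ := Function.ne_iff.mp hx
  intro h
  apply hi
  have := congrFun h (e i)
  rwa [e.injective.extend_apply] at this

lemma posdef_submatrix {M : Matrix β β ℝ} (hM : M.PosDef) (e : α ↪ β) :
    (M.submatrix e e).PosDef := by
  exact hM.submatrix e.injective

end ext

lemma quad_le_lambdaMax [Nonempty m] (hA : A.IsHermitian) (x : m → ℝ) :
    x ⬝ᵥ A *ᵥ x ≤ lambdaMax A * (x ⬝ᵥ x) := by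
  obtain ⟨c, h1, h2⟩ := spectral_coords hA x
  rw [h1, h2, Finset.mul_sum]
  exact Finset.sum_le_sum fun i _ =>
    mul_le_mul_of_nonneg_right (le_lambdaMax hA i) (sq_nonneg _)

lemma lambdaMin_mul_le_quad [Nonempty m] (hA : A.IsHermitian) (x : m → ℝ) :
    lambdaMin A * (x ⬝ᵥ x) ≤ x ⬝ᵥ A *ᵥ x := by
  obtain ⟨c, h1, h2⟩ := spectral_coords hA x
  rw [h1, h2, Finset.mul_sum]
  exact Finset.sum_le_sum fun i _ =>
    mul_le_mul_of_nonneg_right (lambdaMin_le hA i) (sq_nonneg _)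

lemma inv_quad_le [Nonempty m] (hA : A.PosDef) (x : m → ℝ) :
    x ⬝ᵥ A⁻¹ *ᵥ x ≤ (lambdaMin A)⁻¹ * (x ⬝ᵥ x) := by
  obtain ⟨c, h1, h2⟩ := inv_spectral_coords hA x
  rw [h1, h2, Finset.mul_sum]
  refine Finset.sum_le_sum fun i _ => mul_le_mul_of_nonneg_right ?_ (sq_nonneg _)
  exact inv_anti₀ (lambdaMin_pos hA) (lambdaMin_le hA.isHermitian i)

lemma le_inv_quad [Nonempty m] (hA : A.PosDef) (x : m → ℝ) :
    (lambdaMax A)⁻¹ * (x ⬝ᵥ x) ≤ x ⬝ᵥ A⁻¹ *ᵥ x := by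
  obtain ⟨c, h1, h2⟩ := inv_spectral_coords hA x
  rw [h1, h2, Finset.mul_sum]
  refine Finset.sum_le_sum fun i _ => mul_le_mul_of_nonneg_right ?_ (sq_nonneg _)
  exact inv_anti₀ (hA.eigenvalues_pos i) (le_lambdaMax hA.isHermitian i)

section mono
variable {β : Type*} [Fintype β] [DecidableEq β]

lemma lambdaMax_submatrix_le {α : Type*} [Fintype α] [DecidableEq α] [Nonempty α]
    {M : Matrix β β ℝ} (hM : M.IsHermitian) (e : α ↪ β) :
    lambdaMax (M.submatrix e e) ≤ lambdaMax M := by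
  have : Nonempty β := ⟨e (Classical.arbitrary α)⟩
  obtain ⟨v, hv1, hv2⟩ := exists_unit_max (hM.submatrix e)
  calc lambdaMax (M.submatrix e e) = v ⬝ᵥ (M.submatrix e e) *ᵥ v := hv2.symm
    _ = (Function.extend e v 0) ⬝ᵥ M *ᵥ (Function.extend e v 0) := (quad_extend M e v).symm
    _ ≤ lambdaMax M * ((Function.extend e v 0) ⬝ᵥ (Function.extend e v 0)) :=
        quad_le_lambdaMax hM _
    _ = lambdaMax M := by rw [dot_extend, hv1, mul_one]

lemma lambdaMin_le_submatrix {α : Type*} [Fintype α] [DecidableEq α] [Nonempty α]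
    {M : Matrix β β ℝ} (hM : M.IsHermitian) (e : α ↪ β) :
    lambdaMin M ≤ lambdaMin (M.submatrix e e) := by
  have : Nonempty β := ⟨e (Classical.arbitrary α)⟩
  obtain ⟨v, hv1, hv2⟩ := exists_unit_min (hM.submatrix e)
  calc lambdaMin M = lambdaMin M * ((Function.extend e v 0) ⬝ᵥ (Function.extend e v 0)) := by
        rw [dot_extend, hv1, mul_one]
    _ ≤ (Function.extend e v 0) ⬝ᵥ M *ᵥ (Function.extend e v 0) := lambdaMin_mul_le_quad hM _
    _ = v ⬝ᵥ (M.submatrix e e) *ᵥ v := quad_extend M e v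
    _ = lambdaMin (M.submatrix e e) := hv2

end mono


section finsetmat
variable {n : ℕ} {C : Matrix (Fin n) (Fin n) ℝ}

/-- coercion embedding from a Finset -/
def coeEmb (S : Finset (Fin n)) : ↥S ↪ Fin n := ⟨Subtype.val, Subtype.val_injective⟩

lemma subMat_eq (S : Finset (Fin n)) : subMat C S = C.submatrix (coeEmb S) (coeEmb S) := rfl

def incEmb {S T : Finset (Fin n)} (h : S ⊆ T) : ↥S ↪ ↥T :=
  ⟨fun i => ⟨i.1, h i.2⟩, by intro a b hab; exact Subtype.ext (by simpa using congrArg Subtype.val hab)⟩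

lemma subMat_sub_eq {S T : Finset (Fin n)} (h : S ⊆ T) :
    subMat C S = (subMat C T).submatrix (incEmb h) (incEmb h) := rfl

lemma subMat_posDef (hC : C.PosDef) (S : Finset (Fin n)) : (subMat C S).PosDef := by
  rw [subMat_eq]; exact posdef_submatrix hC (coeEmb S)

lemma lambdaMax_subMat_mono (hC : C.IsHermitian) {S T : Finset (Fin n)} (h : S ⊆ T)
    (hS : S.Nonempty) : lambdaMax (subMat C S) ≤ lambdaMax (subMat C T) := by
  have : Nonempty ↥S := ⟨⟨hS.choose, hS.choose_spec⟩⟩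
  rw [subMat_sub_eq h]
  exact lambdaMax_submatrix_le ((hC.submatrix _).submatrix _) (incEmb h)

lemma lambdaMin_subMat_anti (hC : C.IsHermitian) {S T : Finset (Fin n)} (h : S ⊆ T)
    (hS : S.Nonempty) : lambdaMin (subMat C T) ≤ lambdaMin (subMat C S) := by
  have : Nonempty ↥S := ⟨⟨hS.choose, hS.choose_spec⟩⟩
  rw [subMat_sub_eq h]
  exact lambdaMin_le_submatrix ((hC.submatrix _).submatrix _) (incEmb h)

variable {k : ℕ}

lemma lamK_set_finite_min :
    {x | ∃ S : Finset (Fin n), S.card = k ∧ x = lambdaMin (subMat C S)}.Finite := by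
  apply Set.Finite.subset (Set.finite_range (fun S : Finset (Fin n) => lambdaMin (subMat C S)))
  rintro x ⟨S, _, rfl⟩; exact ⟨S, rfl⟩

lemma lamK_set_finite_max :
    {x | ∃ S : Finset (Fin n), S.card = k ∧ x = lambdaMax (subMat C S)}.Finite := by
  apply Set.Finite.subset (Set.finite_range (fun S : Finset (Fin n) => lambdaMax (subMat C S)))
  rintro x ⟨S, _, rfl⟩; exact ⟨S, rfl⟩

lemma lamK_set_nonempty_min (hkn : k ≤ n) :
    {x | ∃ S : Finset (Fin n), S.card = k ∧ x = lambdaMin (subMat C S)}.Nonempty := by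
  obtain ⟨S, _, hcard⟩ := Finset.exists_subset_card_eq (s := (Finset.univ : Finset (Fin n)))
    (by simpa using hkn)
  exact ⟨_, S, hcard, rfl⟩

lemma lamK_set_nonempty_max (hkn : k ≤ n) :
    {x | ∃ S : Finset (Fin n), S.card = k ∧ x = lambdaMax (subMat C S)}.Nonempty := by
  obtain ⟨S, _, hcard⟩ := Finset.exists_subset_card_eq (s := (Finset.univ : Finset (Fin n)))
    (by simpa using hkn)
  exact ⟨_, S, hcard, rfl⟩

lemma lambdaMinK_le {S : Finset (Fin n)} (hS : S.card = k) :
    lambdaMinK C k ≤ lambdaMin (subMat C S) :=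
  csInf_le lamK_set_finite_min.bddBelow ⟨S, hS, rfl⟩

lemma le_lambdaMaxK {S : Finset (Fin n)} (hS : S.card = k) :
    lambdaMax (subMat C S) ≤ lambdaMaxK C k :=
  le_csSup lamK_set_finite_max.bddAbove ⟨S, hS, rfl⟩

lemma lambdaMinK_pos (hC : C.PosDef) (hk1 : 1 ≤ k) (hkn : k ≤ n) : 0 < lambdaMinK C k := by
  obtain ⟨S, hcard, hx⟩ := (lamK_set_nonempty_min (C := C) hkn).csInf_mem lamK_set_finite_min
  rw [lambdaMinK, hx]
  have : Nonempty ↥S := Finset.Nonempty.to_subtype (Finset.card_pos.mp (hcard ▸ hk1))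
  exact lambdaMin_pos (subMat_posDef hC S)

lemma lambdaMaxK_pos (hC : C.PosDef) (hk1 : 1 ≤ k) (hkn : k ≤ n) : 0 < lambdaMaxK C k := by
  obtain ⟨S, hcard, hx⟩ := (lamK_set_nonempty_max (C := C) hkn).csSup_mem lamK_set_finite_max
  rw [lambdaMaxK, hx]
  have : Nonempty ↥S := Finset.Nonempty.to_subtype (Finset.card_pos.mp (hcard ▸ hk1))
  exact lambdaMax_pos (subMat_posDef hC S)

end finsetmat

section r2bounds
variable {n k : ℕ} {C : Matrix (Fin n) (Fin n) ℝ}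

lemma dot_self_coe (b : Fin n → ℝ) (S : Finset (Fin n)) :
    (fun i : S => b i) ⬝ᵥ (fun i : S => b i) = ∑ i ∈ S, b i ^ 2 := by
  unfold dotProduct
  rw [← Finset.sum_coe_sort S (fun i => b i ^ 2)]
  exact Finset.sum_congr rfl fun i _ => (pow_two _).symm

lemma R2_empty (b : Fin n → ℝ) : R2 C b ∅ = 0 := by
  simp [R2, dotProduct]

lemma R2_le_invMin (hC : C.PosDef) (hk1 : 1 ≤ k) (hkn : k ≤ n) (b : Fin n → ℝ)
    {S : Finset (Fin n)} (hSk : S.card ≤ k) :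
    R2 C b S ≤ (lambdaMinK C k)⁻¹ * ∑ i ∈ S, b i ^ 2 := by
  rcases S.eq_empty_or_nonempty with rfl | hS
  · rw [R2_empty]; simp
  · have hne : Nonempty ↥S := hS.to_subtype
    obtain ⟨T, hST, hTcard⟩ := Finset.exists_superset_card_eq hSk (by simpa using hkn)
    have hchain : lambdaMinK C k ≤ lambdaMin (subMat C S) :=
      le_trans (lambdaMinK_le hTcard) (lambdaMin_subMat_anti hC.isHermitian hST hS)
    have h1 := inv_quad_le (subMat_posDef hC S) (fun i : S => b i)
    rw [dot_self_coe] at h1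
    refine le_trans h1 (mul_le_mul_of_nonneg_right ?_ ?_)
    · exact inv_anti₀ (lambdaMinK_pos hC hk1 hkn) hchain
    · exact Finset.sum_nonneg fun i _ => sq_nonneg _

lemma invMax_le_R2 (hC : C.PosDef) (hk1 : 1 ≤ k) (hkn : k ≤ n) (b : Fin n → ℝ)
    {S : Finset (Fin n)} (hSk : S.card ≤ k) :
    (lambdaMaxK C k)⁻¹ * ∑ i ∈ S, b i ^ 2 ≤ R2 C b S := by
  rcases S.eq_empty_or_nonempty with rfl | hS
  · rw [R2_empty]; simp
  · have hne : Nonempty ↥S := hS.to_subtype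
    obtain ⟨T, hST, hTcard⟩ := Finset.exists_superset_card_eq hSk (by simpa using hkn)
    have hchain : lambdaMax (subMat C S) ≤ lambdaMaxK C k :=
      le_trans (lambdaMax_subMat_mono hC.isHermitian hST hS) (le_lambdaMaxK hTcard)
    have h1 := le_inv_quad (subMat_posDef hC S) (fun i : S => b i)
    rw [dot_self_coe] at h1
    refine le_trans (mul_le_mul_of_nonneg_right ?_ ?_) h1
    · exact inv_anti₀ (lambdaMax_pos (subMat_posDef hC S)) hchain
    · exact Finset.sum_nonneg fun i _ => sq_nonneg _

lemma R2_nonneg (hC : C.PosDef) (b : Fin n → ℝ) (S : Finset (Fin n)) : 0 ≤ R2 C b S := by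
  rcases S.eq_empty_or_nonempty with rfl | hS
  · rw [R2_empty]
  · have hne : Nonempty ↥S := hS.to_subtype
    have := le_inv_quad (subMat_posDef hC S) (fun i : S => b i)
    rw [dot_self_coe] at this
    refine le_trans ?_ this
    have h1 : 0 < lambdaMax (subMat C S) := lambdaMax_pos (subMat_posDef hC S)
    have h2 : (0:ℝ) ≤ ∑ i ∈ S, b i ^ 2 := Finset.sum_nonneg fun i _ => sq_nonneg _
    positivity

end r2bounds

section valsets
variable {n k : ℕ}

lemma valset_finite (val : Finset (Fin n) → ℝ) (A : Finset (Fin n)) :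
    {x | ∃ S ⊆ A, S.card ≤ k ∧ x = val S}.Finite := by
  apply Set.Finite.subset (Set.finite_range val)
  rintro x ⟨S, _, _, rfl⟩; exact ⟨S, rfl⟩

lemma valset_nonempty (val : Finset (Fin n) → ℝ) (A : Finset (Fin n)) :
    {x | ∃ S ⊆ A, S.card ≤ k ∧ x = val S}.Nonempty :=
  ⟨val ∅, ∅, Finset.empty_subset A, by simp⟩

lemma le_valsup {val : Finset (Fin n) → ℝ} {A S : Finset (Fin n)} (hSA : S ⊆ A)
    (hSk : S.card ≤ k) : val S ≤ sSup {x | ∃ S ⊆ A, S.card ≤ k ∧ x = val S} :=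
  le_csSup (valset_finite val A).bddAbove ⟨S, hSA, hSk, rfl⟩

lemma valsup_le {val : Finset (Fin n) → ℝ} {A : Finset (Fin n)} {c : ℝ}
    (h : ∀ S ⊆ A, S.card ≤ k → val S ≤ c) :
    sSup {x | ∃ S ⊆ A, S.card ≤ k ∧ x = val S} ≤ c := by
  apply csSup_le (valset_nonempty val A)
  rintro x ⟨S, hSA, hSk, rfl⟩; exact h S hSA hSk

lemma valsup_mem {val : Finset (Fin n) → ℝ} {A : Finset (Fin n)} :
    ∃ S ⊆ A, S.card ≤ k ∧ sSup {x | ∃ S ⊆ A, S.card ≤ k ∧ x = val S} = val S :=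
  (valset_nonempty val A).csSup_mem (valset_finite val A)

end valsets

section gval
variable {n k : ℕ}

/-- best `≤ k`-subset modular value -/
noncomputable def gval (w : Fin n → ℝ) (k : ℕ) (A : Finset (Fin n)) : ℝ :=
  sSup {x | ∃ S ⊆ A, S.card ≤ k ∧ x = ∑ i ∈ S, w i}

lemma le_gval {w : Fin n → ℝ} {A S : Finset (Fin n)} (hSA : S ⊆ A) (hSk : S.card ≤ k) :
    ∑ i ∈ S, w i ≤ gval w k A := le_valsup (val := fun S => ∑ i ∈ S, w i) hSA hSk

lemma gval_le {w : Fin n → ℝ} {A : Finset (Fin n)} {c : ℝ}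
    (h : ∀ S ⊆ A, S.card ≤ k → ∑ i ∈ S, w i ≤ c) : gval w k A ≤ c :=
  valsup_le (val := fun S => ∑ i ∈ S, w i) h

lemma gval_nonneg {w : Fin n → ℝ} {A : Finset (Fin n)} : 0 ≤ gval w k A := by
  have := le_gval (w := w) (k := k) (Finset.empty_subset A) (by simp)
  simpa using this

lemma gval_mono {w : Fin n → ℝ} {A B : Finset (Fin n)} (hAB : A ⊆ B) :
    gval w k A ≤ gval w k B :=
  gval_le fun S hSA hSk => le_gval (hSA.trans hAB) hSk

lemma gval_mem {w : Fin n → ℝ} {A : Finset (Fin n)} :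
    ∃ S ⊆ A, S.card ≤ k ∧ gval w k A = ∑ i ∈ S, w i :=
  valsup_mem (val := fun S => ∑ i ∈ S, w i)

lemma gval_empty {w : Fin n → ℝ} (hw : ∀ i, 0 ≤ w i) : gval w k (∅ : Finset (Fin n)) = 0 := by
  refine le_antisymm (gval_le fun S hS _ => ?_) gval_nonneg
  rw [Finset.subset_empty.mp hS]; simp

/-- the key "submodular-cover" inequality for the top-k modular objective. -/
lemma gval_key (hk1 : 1 ≤ k) {w : Fin n → ℝ} (hw : ∀ i, 0 ≤ w i) (A B : Finset (Fin n)) :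
    gval w k B ≤ gval w k A + ∑ x ∈ B \ A, (gval w k (insert x A) - gval w k A) := by
  obtain ⟨S, hSA, hSk, hgS⟩ := gval_mem (w := w) (k := k) (A := A)
  -- define threshold t and its properties
  obtain ⟨t, ht0, htS, hmarg, hfill⟩ :
      ∃ t : ℝ, 0 ≤ t ∧ (∀ i ∈ S, t ≤ w i) ∧
        (∀ x ∉ A, gval w k A + max (w x - t) 0 ≤ gval w k (insert x A)) ∧
        (∀ P ⊆ A, P.card ≤ k → (∑ i ∈ P, w i) + ((k : ℝ) - P.card) * t ≤ gval w k A) := by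
    by_cases hcard : S.card = k
    · have hSne : S.Nonempty := Finset.card_pos.mp (by omega)
      obtain ⟨m, hmS, hmw⟩ := Finset.exists_mem_eq_inf' hSne w
      set t := S.inf' hSne w with htdef
      have htle : ∀ i ∈ S, t ≤ w i := fun i hi => Finset.inf'_le w hi
      refine ⟨t, hmw ▸ hw m, htle, ?_, ?_⟩
      · intro x hxA
        rcases le_or_gt (w x) t with hwx | hwx
        · rw [max_eq_right (by linarith)]
          rw [add_zero]
          exact gval_mono (Finset.subset_insert x A)
        · rw [max_eq_left (by linarith)]
          have hxS : x ∉ S := fun h => hxA (hSA h)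
          set S' := insert x (S.erase m) with hS'
          have hS'sub : S' ⊆ insert x A := by
            intro y hy
            rcases Finset.mem_insert.mp hy with rfl | hy
            · exact Finset.mem_insert_self _ _
            · exact Finset.mem_insert_of_mem (hSA (Finset.mem_of_mem_erase hy))
          have hxSe : x ∉ S.erase m := fun h => hxS (Finset.mem_of_mem_erase h)
          have hS'card : S'.card ≤ k := by
            rw [hS', Finset.card_insert_of_notMem hxSe, Finset.card_erase_of_mem hmS, hcard]
            omega
          have hsum : ∑ i ∈ S', w i = gval w k A - t + w x := by
            rw [hS', Finset.sum_insert hxSe, hgS]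
            linarith [Finset.sum_erase_add S w hmS, hmw]
          have hgg := le_gval (w := w) (k := k) hS'sub hS'card
          rw [hsum] at hgg
          linarith
      · intro P hPA hPk
        have h1 : S.card - P.card ≤ (S \ P).card := Finset.le_card_sdiff P S
        have h2 : k - P.card ≤ (S \ P).card := by omega
        obtain ⟨V, hVsub, hVcard⟩ : ∃ V ⊆ S \ P, V.card = k - P.card :=
          Finset.exists_subset_card_eq h2
        have hdisj : Disjoint P V := by
          apply Finset.disjoint_left.mpr
          intro a haP haV
          exact (Finset.mem_sdiff.mp (hVsub haV)).2 haP
        have hUsub : P ∪ V ⊆ A := Finset.union_subset hPA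
            (fun y hy => hSA (Finset.mem_sdiff.mp (hVsub hy)).1)
        have hUcard : (P ∪ V).card ≤ k := by
          rw [Finset.card_union_of_disjoint hdisj, hVcard]
          omega
        have hUsum := le_gval (w := w) (k := k) hUsub hUcard
        rw [Finset.sum_union hdisj] at hUsum
        have hVsum : ((k : ℝ) - P.card) * t ≤ ∑ i ∈ V, w i := by
          have h1 : ∀ i ∈ V, t ≤ w i := fun i hi =>
            htle i (Finset.mem_sdiff.mp (hVsub hi)).1
          have h2 := Finset.card_nsmul_le_sum V w t h1
          rw [nsmul_eq_mul, hVcard] at h2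
          have hcastV : ((k - P.card : ℕ) : ℝ) = (k : ℝ) - P.card := by
            push_cast [Nat.cast_sub (by omega : P.card ≤ k)]
            ring
          rw [hcastV] at h2
          exact h2
        linarith
    · -- S.card < k, take t = 0
      have hcard' : S.card < k := lt_of_le_of_ne hSk hcard
      refine ⟨0, le_refl 0, fun i _ => hw i, ?_, ?_⟩
      · intro x hxA
        rw [sub_zero, max_eq_left (hw x)]
        have hxS : x ∉ S := fun h => hxA (hSA h)
        have hsub : insert x S ⊆ insert x A := Finset.insert_subset_insert x hSA
        have hc : (insert x S).card ≤ k := by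
          rw [Finset.card_insert_of_notMem hxS]; omega
        have hgg := le_gval (w := w) (k := k) hsub hc
        rw [Finset.sum_insert hxS] at hgg
        rw [hgS]
        linarith
      · intro P hPA hPk
        rw [mul_zero, add_zero]
        exact le_gval hPA hPk
  -- now the main bound
  have hstep1 : gval w k B ≤ gval w k A + ∑ x ∈ B \ A, max (w x - t) 0 := by
    apply gval_le
    intro T hTB hTk
    have hsplit : ∑ i ∈ T, w i = ∑ i ∈ T ∩ A, w i + ∑ i ∈ T \ A, w i := by
      rw [Finset.sum_inter_add_sum_sdiff]
    have h1 : ∑ i ∈ T \ A, w i ≤ (T \ A).card * t + ∑ i ∈ T \ A, max (w i - t) 0 := by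
      have : ∀ i ∈ T \ A, w i ≤ t + max (w i - t) 0 := by
        intro i _
        have := le_max_left (w i - t) 0
        linarith
      calc ∑ i ∈ T \ A, w i ≤ ∑ i ∈ T \ A, (t + max (w i - t) 0) :=
            Finset.sum_le_sum this
        _ = (T \ A).card * t + ∑ i ∈ T \ A, max (w i - t) 0 := by
            rw [Finset.sum_add_distrib, Finset.sum_const, nsmul_eq_mul]
    have h2 : ∑ i ∈ T \ A, max (w i - t) 0 ≤ ∑ x ∈ B \ A, max (w x - t) 0 := by
      apply Finset.sum_le_sum_of_subset_of_nonneg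
      · exact fun y hy => Finset.mem_sdiff.mpr
          ⟨hTB (Finset.mem_sdiff.mp hy).1, (Finset.mem_sdiff.mp hy).2⟩
      · intro i _ _; exact le_max_right _ _
    have h3 : ∑ i ∈ T ∩ A, w i + ((T \ A).card : ℝ) * t ≤ gval w k A := by
      have hPA : T ∩ A ⊆ A := Finset.inter_subset_right
      have hPk : (T ∩ A).card ≤ k :=
        le_trans (Finset.card_le_card Finset.inter_subset_left) hTk
      have hfil := hfill (T ∩ A) hPA hPk
      have hcards : ((T \ A).card : ℝ) ≤ (k : ℝ) - (T ∩ A).card := by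
        have h5 := Finset.card_sdiff_add_card_inter T A
        have h6 : (T \ A).card + (T ∩ A).card ≤ k := by omega
        have h7 := (Nat.cast_le (α := ℝ)).mpr h6
        push_cast at h7
        linarith
      nlinarith [mul_le_mul_of_nonneg_right hcards ht0]
    linarith
  have hstep2 : ∑ x ∈ B \ A, max (w x - t) 0 ≤
      ∑ x ∈ B \ A, (gval w k (insert x A) - gval w k A) := by
    apply Finset.sum_le_sum
    intro x hx
    have hxA : x ∉ A := (Finset.mem_sdiff.mp hx).2
    have := hmarg x hxA
    linarith
  linarith

end gval


section fma
variable {n s k : ℕ} {bs : Fin s → Fin n → ℝ}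

lemma Fma_eq (bs : Fin s → Fin n → ℝ) (k : ℕ) (D : Finset (Fin n)) :
    Fma bs k D = ∑ j, gval (fun i => bs j i ^ 2) k D := rfl

lemma Fma_nonneg (D : Finset (Fin n)) : 0 ≤ Fma bs k D := by
  rw [Fma_eq]
  exact Finset.sum_nonneg fun j _ => gval_nonneg

lemma Fma_mono {A B : Finset (Fin n)} (h : A ⊆ B) : Fma bs k A ≤ Fma bs k B := by
  rw [Fma_eq, Fma_eq]
  exact Finset.sum_le_sum fun j _ => gval_mono h

lemma Fma_empty : Fma bs k (∅ : Finset (Fin n)) = 0 := by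
  rw [Fma_eq]
  exact Finset.sum_eq_zero fun j _ => gval_empty fun i => sq_nonneg _

lemma Fma_key (hk1 : 1 ≤ k) (A B : Finset (Fin n)) :
    Fma bs k B ≤ Fma bs k A + ∑ x ∈ B \ A, (Fma bs k (insert x A) - Fma bs k A) := by
  simp only [Fma_eq]
  calc ∑ j, gval (fun i => bs j i ^ 2) k B
      ≤ ∑ j, (gval (fun i => bs j i ^ 2) k A +
          ∑ x ∈ B \ A, (gval (fun i => bs j i ^ 2) k (insert x A) -
            gval (fun i => bs j i ^ 2) k A)) :=
        Finset.sum_le_sum fun j _ => gval_key hk1 (fun i => sq_nonneg _) A B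
    _ = _ := by
        rw [Finset.sum_add_distrib]
        congr 1
        rw [Finset.sum_comm]
        exact Finset.sum_congr rfl fun x _ => by rw [Finset.sum_sub_distrib]

lemma greedy_bound (hk1 : 1 ≤ k) {d : ℕ} (hkd : k ≤ d)
    (D : ℕ → Finset (Fin n)) (hD0 : D 0 = ∅)
    (hgreedy : ∀ i < d, ∃ x ∉ D i, D (i + 1) = insert x (D i) ∧
      ∀ y ∉ D i, Fma bs k (insert y (D i)) ≤ Fma bs k (insert x (D i)))
    (Dstar : Finset (Fin n)) (hstar : Dstar.card ≤ d) :
    (1 - Real.exp (-1)) * Fma bs k Dstar ≤ Fma bs k (D d) := by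
  set M := Fma bs k Dstar with hM
  have hM0 : 0 ≤ M := Fma_nonneg Dstar
  have hd1 : 1 ≤ d := le_trans hk1 hkd
  have hdR : (1:ℝ) ≤ (d:ℝ) := by exact_mod_cast hd1
  have hdpos : (0:ℝ) < (d:ℝ) := by linarith
  have hq0 : (0:ℝ) ≤ 1 - 1/(d:ℝ) := by
    have : 1/(d:ℝ) ≤ 1 := by
      rw [div_le_one hdpos]; exact hdR
    linarith
  have key : ∀ i ≤ d, M - Fma bs k (D i) ≤ (1 - 1/(d:ℝ))^i * M := by
    intro i
    induction i with
    | zero =>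
      intro _
      rw [hD0, Fma_empty, pow_zero, one_mul]
      linarith
    | succ i ih =>
      intro hsd
      have hid : i < d := by omega
      have ihi := ih (by omega)
      obtain ⟨x, hxD, hDsucc, hxmax⟩ := hgreedy i hid
      have hΔ0 : 0 ≤ Fma bs k (D (i+1)) - Fma bs k (D i) := by
        rw [hDsucc]
        have := Fma_mono (bs := bs) (k := k) (Finset.subset_insert x (D i))
        linarith
      have hterm : ∀ y ∈ Dstar \ D i,
          Fma bs k (insert y (D i)) - Fma bs k (D i) ≤
            Fma bs k (D (i+1)) - Fma bs k (D i) := by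
        intro y hy
        have hyD : y ∉ D i := (Finset.mem_sdiff.mp hy).2
        have := hxmax y hyD
        rw [hDsucc]
        linarith
      have hcard : ((Dstar \ D i).card : ℝ) ≤ (d : ℝ) := by
        have h1 : (Dstar \ D i).card ≤ Dstar.card :=
          Finset.card_le_card (Finset.sdiff_subset)
        exact_mod_cast le_trans h1 hstar
      have hsum : ∑ y ∈ Dstar \ D i,
          (Fma bs k (insert y (D i)) - Fma bs k (D i)) ≤
            (d:ℝ) * (Fma bs k (D (i+1)) - Fma bs k (D i)) := by
        calc ∑ y ∈ Dstar \ D i, (Fma bs k (insert y (D i)) - Fma bs k (D i))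
            ≤ (Dstar \ D i).card • (Fma bs k (D (i+1)) - Fma bs k (D i)) :=
              Finset.sum_le_card_nsmul _ _ _ hterm
          _ = ((Dstar \ D i).card : ℝ) * (Fma bs k (D (i+1)) - Fma bs k (D i)) := by
              rw [nsmul_eq_mul]
          _ ≤ (d:ℝ) * (Fma bs k (D (i+1)) - Fma bs k (D i)) :=
              mul_le_mul_of_nonneg_right hcard hΔ0
      have hkey := Fma_key (bs := bs) hk1 (D i) Dstar
      have hstep : M - Fma bs k (D i) ≤
          (d:ℝ) * ((M - Fma bs k (D i)) - (M - Fma bs k (D (i+1)))) := by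
        have : M ≤ Fma bs k (D i) + (d:ℝ) * (Fma bs k (D (i+1)) - Fma bs k (D i)) := by
          calc M ≤ Fma bs k (D i) + ∑ y ∈ Dstar \ D i,
                (Fma bs k (insert y (D i)) - Fma bs k (D i)) := hkey
            _ ≤ _ := by linarith
        ring_nf
        ring_nf at this
        linarith
      set a := M - Fma bs k (D i) with ha
      set b := M - Fma bs k (D (i+1)) with hb
      have hba : b ≤ (1 - 1/(d:ℝ)) * a := by
        have h1 : a / (d:ℝ) ≤ a - b := by
          rw [div_le_iff₀ hdpos]
          linarith [hstep]
        have h2 : (1 - 1/(d:ℝ)) * a = a - a / (d:ℝ) := by ring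
        linarith
      calc b ≤ (1 - 1/(d:ℝ)) * a := hba
        _ ≤ (1 - 1/(d:ℝ)) * ((1 - 1/(d:ℝ))^i * M) := mul_le_mul_of_nonneg_left ihi hq0
        _ = (1 - 1/(d:ℝ))^(i+1) * M := by ring
  have hfinal := key d le_rfl
  have hpow : (1 - 1/(d:ℝ))^d ≤ Real.exp (-1) := by
    have h1 : 1 - 1/(d:ℝ) ≤ Real.exp (-(1/(d:ℝ))) := by
      have := Real.add_one_le_exp (-(1/(d:ℝ)))
      linarith
    have h2 : (1 - 1/(d:ℝ))^d ≤ (Real.exp (-(1/(d:ℝ))))^d := pow_le_pow_left₀ hq0 h1 d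
    have h3 : (Real.exp (-(1/(d:ℝ))))^d = Real.exp ((d:ℝ) * (-(1/(d:ℝ)))) := by
      rw [Real.exp_nat_mul]
    have h4 : (d:ℝ) * (-(1/(d:ℝ))) = -1 := by
      field_simp
    rw [h3, h4] at h2
    exact h2
  have h5 : (1 - 1/(d:ℝ))^d * M ≤ Real.exp (-1) * M :=
    mul_le_mul_of_nonneg_right hpow hM0
  linarith

end fma

section fdict
variable {n s k : ℕ} {C : Matrix (Fin n) (Fin n) ℝ} {bs : Fin s → Fin n → ℝ}

lemma Fdict_le_Fma (hC : C.PosDef) (hk1 : 1 ≤ k) (hkn : k ≤ n) (D : Finset (Fin n)) :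
    Fdict C bs k D ≤ (lambdaMinK C k)⁻¹ * Fma bs k D := by
  have hpos : (0:ℝ) ≤ (lambdaMinK C k)⁻¹ :=
    inv_nonneg.mpr (lambdaMinK_pos hC hk1 hkn).le
  rw [Fma_eq, Finset.mul_sum]
  apply Finset.sum_le_sum
  intro j _
  apply valsup_le (val := fun S => R2 C (bs j) S)
  intro S hSA hSk
  calc R2 C (bs j) S ≤ (lambdaMinK C k)⁻¹ * ∑ i ∈ S, bs j i ^ 2 :=
        R2_le_invMin hC hk1 hkn (bs j) hSk
    _ ≤ (lambdaMinK C k)⁻¹ * gval (fun i => bs j i ^ 2) k D :=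
        mul_le_mul_of_nonneg_left (le_gval hSA hSk) hpos

lemma Fma_le_Fdict (hC : C.PosDef) (hk1 : 1 ≤ k) (hkn : k ≤ n) (D : Finset (Fin n)) :
    (lambdaMaxK C k)⁻¹ * Fma bs k D ≤ Fdict C bs k D := by
  rw [Fma_eq, Finset.mul_sum]
  apply Finset.sum_le_sum
  intro j _
  obtain ⟨S, hSA, hSk, hEq⟩ := gval_mem (w := fun i => bs j i ^ 2) (k := k) (A := D)
  rw [hEq]
  calc (lambdaMaxK C k)⁻¹ * ∑ i ∈ S, bs j i ^ 2 ≤ R2 C (bs j) S :=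
        invMax_le_R2 hC hk1 hkn (bs j) hSk
    _ ≤ _ := le_valsup (val := fun S => R2 C (bs j) S) hSA hSk

end fdict


end Aux

/-- `SDS_MA` guarantee: the greedy dictionary `D_d` built by maximizing the modular
approximation `F̂` satisfies `F(D_d) ≥ (λmin(C,k)/λmax(C,k)) (1 − 1/e) F(D*)` for any
dictionary `D*` of size at most `d`. -/

theorem sdsma_bound {n s k d : ℕ}
    (C : Matrix (Fin n) (Fin n) ℝ) (bs : Fin s → Fin n → ℝ) (hC : C.PosDef)
    (hdiag : ∀ i, C i i = 1) (hk1 : 1 ≤ k) (hkd : k ≤ d) (hdn : d ≤ n)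
    (D : ℕ → Finset (Fin n)) (hD0 : D 0 = ∅)
    (hgreedy : ∀ i < d, ∃ x ∉ D i, D (i + 1) = insert x (D i) ∧
      ∀ y ∉ D i, Fma bs k (insert y (D i)) ≤ Fma bs k (insert x (D i)))
    (Dstar : Finset (Fin n)) (hstar : Dstar.card ≤ d) :
    lambdaMinK C k / lambdaMaxK C k * (1 - Real.exp (-1)) * Fdict C bs k Dstar ≤
      Fdict C bs k (D d) := by
  have hkn : k ≤ n := hkd.trans hdn
  have hlamm : 0 < lambdaMinK C k := lambdaMinK_pos hC hk1 hkn
  have hlamM : 0 < lambdaMaxK C k := lambdaMaxK_pos hC hk1 hkn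
  have he : Real.exp (-1) < 1 := Real.exp_lt_one_iff.mpr (by norm_num)
  have he0 : (0:ℝ) ≤ 1 - Real.exp (-1) := by linarith
  have h1 := Fdict_le_Fma (bs := bs) hC hk1 hkn Dstar
  have h2 := greedy_bound (bs := bs) hk1 hkd D hD0 hgreedy Dstar hstar
  have h3 := Fma_le_Fdict (bs := bs) hC hk1 hkn (D d)
  calc lambdaMinK C k / lambdaMaxK C k * (1 - Real.exp (-1)) * Fdict C bs k Dstar
      ≤ lambdaMinK C k / lambdaMaxK C k * (1 - Real.exp (-1)) *
          ((lambdaMinK C k)⁻¹ * Fma bs k Dstar) := by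
        apply mul_le_mul_of_nonneg_left h1
        positivity
    _ = ((1 - Real.exp (-1)) * Fma bs k Dstar) * (lambdaMaxK C k)⁻¹ := by
        field_simp
    _ ≤ Fma bs k (D d) * (lambdaMaxK C k)⁻¹ := by
        apply mul_le_mul_of_nonneg_right h2
        positivity
    _ = (lambdaMaxK C k)⁻¹ * Fma bs k (D d) := by ring
    _ ≤ Fdict C bs k (D d) := h3
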